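/- Let (W, S) be a Coxeter system with length function ℓ, and let σ be a group automorphism of W with σ(S) = S. Let C ⊆ W be a σ-conjugacy class that contains some σ-straight element. Then an element of C is of minimal length in C if and only if it is σ-straight; in particular, all σ-straight elements of C have the same length, and the minimal length of elements of C equals the common length of its σ-straight elements. -/

import Mathlib

/-- For an automorphism `σ` of a group `W` and `w ∈ W`, the twisted product
`g_m(w) = w · σ(w) · σ²(w) ⋯ σ^{m−1}(w)`. -/
def twistProd {W : Type*} [Group W] (σ : W → W) (w : W) (m : ℕ) : W :=
  ((List.range m).map fun i => σ^[i] w).prod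

/-- `w` is `σ`-straight (with respect to the length function of `cs`). -/
def IsSigmaStraight {B W : Type*} [Group W] {M : CoxeterMatrix B}
    (cs : CoxeterSystem M W) (σ : W ≃* W) (w : W) : Prop :=
  ∀ m : ℕ, 1 ≤ m → cs.length (twistProd σ w m) = m * cs.length w

section Aux

variable {B W : Type*} [Group W] {M : CoxeterMatrix B}

lemma iter_map_mul (σ : W ≃* W) (i : ℕ) (a b : W) :
    (⇑σ)^[i] (a * b) = (⇑σ)^[i] a * (⇑σ)^[i] b := by
  induction i with
  | zero => rfl
  | succ n ih => simp [Function.iterate_succ_apply', ih]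

lemma iter_map_inv (σ : W ≃* W) (i : ℕ) (a : W) :
    (⇑σ)^[i] a⁻¹ = ((⇑σ)^[i] a)⁻¹ := by
  induction i with
  | zero => rfl
  | succ n ih => simp [Function.iterate_succ_apply', ih]

lemma iter_map_one (σ : W ≃* W) (i : ℕ) :
    (⇑σ)^[i] (1 : W) = 1 := by
  induction i with
  | zero => rfl
  | succ n ih => simp [Function.iterate_succ_apply', ih]

lemma twistProd_zero (σ : W → W) (w : W) : twistProd σ w 0 = 1 := rfl

lemma twistProd_succ (σ : W → W) (w : W) (m : ℕ) :
    twistProd σ w (m + 1) = twistProd σ w m * σ^[m] w := by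
  simp [twistProd, List.range_succ]

lemma twistProd_add (σ : W ≃* W) (w : W) (m k : ℕ) :
    twistProd ⇑σ w (m + k) = twistProd ⇑σ w m * (⇑σ)^[m] (twistProd ⇑σ w k) := by
  induction k with
  | zero => simp [twistProd_zero, iter_map_one]
  | succ n ih =>
    rw [← Nat.add_assoc, twistProd_succ, ih, twistProd_succ, iter_map_mul, mul_assoc,
      ← Function.iterate_add_apply]

lemma twistProd_conj (σ : W ≃* W) (x w : W) (m : ℕ) :
    twistProd ⇑σ (x * w * (σ x)⁻¹) m = x * twistProd ⇑σ w m * ((⇑σ)^[m] x)⁻¹ := by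
  induction m with
  | zero => simp [twistProd_zero]
  | succ n ih =>
    rw [twistProd_succ, ih, twistProd_succ, iter_map_mul, iter_map_mul, iter_map_inv]
    have : (⇑σ)^[n] (σ x) = (⇑σ)^[n + 1] x := by
      rw [Function.iterate_succ_apply]
    rw [this]
    group

variable (cs : CoxeterSystem M W)

lemma length_monoidHom_le (φ : W →* W)
    (hφ : ∀ i : B, ∃ j : B, φ (cs.simple i) = cs.simple j) (w : W) :
    cs.length (φ w) ≤ cs.length w := by
  obtain ⟨ω, hω, rfl⟩ := cs.exists_reduced_word w
  choose f hf using hφ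
  have hmap : ∀ ω' : List B, φ (cs.wordProd ω') = cs.wordProd (ω'.map f) := by
    intro ω'
    induction ω' with
    | nil => simp
    | cons i t ih => rw [cs.wordProd_cons, map_mul, ih, List.map_cons, cs.wordProd_cons, hf]
  calc cs.length (φ (cs.wordProd ω)) = cs.length (cs.wordProd (ω.map f)) := by rw [hmap]
    _ ≤ (ω.map f).length := cs.length_wordProd_le _
    _ = ω.length := List.length_map f
    _ = cs.length (cs.wordProd ω) := Eq.symm hω

lemma length_sigma (σ : W ≃* W)
    (hσS : ⇑σ '' Set.range cs.simple = Set.range cs.simple) (w : W) :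
    cs.length (σ w) = cs.length w := by
  have h1 : ∀ i : B, ∃ j : B, σ (cs.simple i) = cs.simple j := by
    intro i
    have : σ (cs.simple i) ∈ Set.range cs.simple := by
      rw [← hσS]; exact ⟨cs.simple i, ⟨i, rfl⟩, rfl⟩
    obtain ⟨j, hj⟩ := this
    exact ⟨j, hj.symm⟩
  have h2 : ∀ i : B, ∃ j : B, σ.symm (cs.simple i) = cs.simple j := by
    intro i
    have : cs.simple i ∈ ⇑σ '' Set.range cs.simple := by
      rw [hσS]; exact ⟨i, rfl⟩
    obtain ⟨a, ⟨j, rfl⟩, ha⟩ := this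
    exact ⟨j, by rw [← ha, MulEquiv.symm_apply_apply]⟩
  refine le_antisymm (length_monoidHom_le cs σ.toMonoidHom h1 w) ?_
  have := length_monoidHom_le cs σ.symm.toMonoidHom h2 (σ w)
  simpa using this

lemma length_iter_sigma (σ : W ≃* W)
    (hσS : ⇑σ '' Set.range cs.simple = Set.range cs.simple) (i : ℕ) (w : W) :
    cs.length ((⇑σ)^[i] w) = cs.length w := by
  induction i with
  | zero => rfl
  | succ n ih => rw [Function.iterate_succ_apply', length_sigma cs σ hσS, ih]

/-- Upper bound: `ℓ(g_m(w)) ≤ m · ℓ(w)`. -/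
lemma length_twistProd_le (σ : W ≃* W)
    (hσS : ⇑σ '' Set.range cs.simple = Set.range cs.simple) (w : W) (m : ℕ) :
    cs.length (twistProd ⇑σ w m) ≤ m * cs.length w := by
  induction m with
  | zero => simp [twistProd_zero]
  | succ n ih =>
    rw [twistProd_succ]
    calc cs.length (twistProd ⇑σ w n * (⇑σ)^[n] w)
        ≤ cs.length (twistProd ⇑σ w n) + cs.length ((⇑σ)^[n] w) := cs.length_mul_le _ _
      _ ≤ n * cs.length w + cs.length w := by
          rw [length_iter_sigma cs σ hσS]; exact Nat.add_le_add_right ih _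
      _ = (n + 1) * cs.length w := by ring

end Aux

open CoxeterSystem in
/-- Let `(W, S)` be a Coxeter system, `σ` an automorphism of `W` with `σ(S) = S`,
and `C` a `σ`-conjugacy class containing a `σ`-straight element. Then an element
of `C` has minimal length in `C` iff it is `σ`-straight; in particular all
`σ`-straight elements of `C` have the same length. -/
theorem minimal_length_iff_straight {B W : Type*} [Group W] {M : CoxeterMatrix B}
    (cs : CoxeterSystem M W) (σ : W ≃* W)
    (hσS : ⇑σ '' Set.range cs.simple = Set.range cs.simple)
    (C : Set W) (hC : ∃ w₀ : W, C = {w' : W | ∃ x : W, w' = x * w₀ * (σ x)⁻¹})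
    (hstraight : ∃ w ∈ C, IsSigmaStraight cs σ w) :
    (∀ w ∈ C, ((∀ w' ∈ C, cs.length w ≤ cs.length w') ↔ IsSigmaStraight cs σ w)) ∧
    (∀ w ∈ C, ∀ w' ∈ C, IsSigmaStraight cs σ w → IsSigmaStraight cs σ w' →
      cs.length w = cs.length w') := by
  obtain ⟨c, rfl⟩ := hC
  -- any two elements of C are σ-conjugate
  have hconj : ∀ w ∈ {w' : W | ∃ x : W, w' = x * c * (σ x)⁻¹},
      ∀ w' ∈ {w' : W | ∃ x : W, w' = x * c * (σ x)⁻¹},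
      ∃ y : W, w' = y * w * (σ y)⁻¹ := by
    rintro w ⟨a, rfl⟩ w' ⟨b, rfl⟩
    refine ⟨b * a⁻¹, ?_⟩
    simp only [map_mul, map_inv]
    group
  -- key inequality: if w, w' are σ-conjugate via y then m ℓ(g_m(w)) relation
  have hkey : ∀ (w w' y : W), w' = y * w * (σ y)⁻¹ → ∀ m : ℕ,
      cs.length (twistProd ⇑σ w m) ≤ cs.length (twistProd ⇑σ w' m) + 2 * cs.length y := by
    rintro w w' y rfl m
    have h1 : twistProd ⇑σ (y * w * (σ y)⁻¹) m
        = y * twistProd ⇑σ w m * ((⇑σ)^[m] y)⁻¹ := twistProd_conj σ y w m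
    have h2 : twistProd ⇑σ w m
        = y⁻¹ * twistProd ⇑σ (y * w * (σ y)⁻¹) m * (⇑σ)^[m] y := by
      rw [h1]; group
    calc cs.length (twistProd ⇑σ w m)
        = cs.length (y⁻¹ * twistProd ⇑σ (y * w * (σ y)⁻¹) m * (⇑σ)^[m] y) := by rw [← h2]
      _ ≤ cs.length (y⁻¹ * twistProd ⇑σ (y * w * (σ y)⁻¹) m)
            + cs.length ((⇑σ)^[m] y) := cs.length_mul_le _ _
      _ ≤ cs.length y⁻¹ + cs.length (twistProd ⇑σ (y * w * (σ y)⁻¹) m)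
            + cs.length ((⇑σ)^[m] y) := Nat.add_le_add_right (cs.length_mul_le _ _) _
      _ = cs.length (twistProd ⇑σ (y * w * (σ y)⁻¹) m) + 2 * cs.length y := by
          rw [cs.length_inv, length_iter_sigma cs σ hσS]; ring
  -- straight elements have minimal length
  have hstraight_min : ∀ w ∈ {w' : W | ∃ x : W, w' = x * c * (σ x)⁻¹},
      IsSigmaStraight cs σ w →
      ∀ w' ∈ {w' : W | ∃ x : W, w' = x * c * (σ x)⁻¹}, cs.length w ≤ cs.length w' := by
    intro w hw hwstr w' hw'
    obtain ⟨y, hy⟩ := hconj w hw w' hw'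
    by_contra hlt
    push_neg at hlt
    -- ℓ(w') + 1 ≤ ℓ(w)
    set m := 2 * cs.length y + 1 with hm
    have h1 : cs.length (twistProd ⇑σ w m) ≤ cs.length (twistProd ⇑σ w' m) + 2 * cs.length y :=
      hkey w w' y hy m
    have h2 : cs.length (twistProd ⇑σ w m) = m * cs.length w := hwstr m (Nat.le_add_left 1 _)
    have h3 : cs.length (twistProd ⇑σ w' m) ≤ m * cs.length w' :=
      length_twistProd_le cs σ hσS w' m
    have h4 : m * cs.length w ≤ m * cs.length w' + 2 * cs.length y := by
      rw [← h2]; exact h1.trans (Nat.add_le_add_right h3 _)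
    have h5 : m * (cs.length w' + 1) ≤ m * cs.length w := Nat.mul_le_mul_left m hlt
    have : m * cs.length w' + m ≤ m * cs.length w' + 2 * cs.length y := by
      calc m * cs.length w' + m = m * (cs.length w' + 1) := by ring
        _ ≤ m * cs.length w := h5
        _ ≤ m * cs.length w' + 2 * cs.length y := h4
    omega
  -- minimal-length elements are straight
  obtain ⟨w₀, hw₀C, hw₀str⟩ := hstraight
  have hmin_straight : ∀ w ∈ {w' : W | ∃ x : W, w' = x * c * (σ x)⁻¹},
      (∀ w' ∈ {w' : W | ∃ x : W, w' = x * c * (σ x)⁻¹}, cs.length w ≤ cs.length w') →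
      IsSigmaStraight cs σ w := by
    intro w hw hwmin
    have hlen : cs.length w = cs.length w₀ :=
      le_antisymm (hwmin w₀ hw₀C) (hstraight_min w₀ hw₀C hw₀str w hw)
    obtain ⟨y, hy⟩ := hconj w₀ hw₀C w hw
    -- lower bound: m ℓ(w) ≤ ℓ(g_m(w)) + 2 ℓ(y) for m ≥ 1
    have hlow : ∀ m : ℕ, 1 ≤ m →
        m * cs.length w ≤ cs.length (twistProd ⇑σ w m) + 2 * cs.length y := by
      intro m hm
      have h := hkey w₀ w y hy m
      rw [hw₀str m hm] at h
      rw [hlen]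
      exact h
    have hup : ∀ m : ℕ, cs.length (twistProd ⇑σ w m) ≤ m * cs.length w :=
      length_twistProd_le cs σ hσS w
    -- superadditivity of the defect
    intro k hk
    by_contra hne
    have hdef : cs.length (twistProd ⇑σ w k) + 1 ≤ k * cs.length w := by
      have := hup k
      omega
    have hiter : ∀ n : ℕ, 1 ≤ n →
        cs.length (twistProd ⇑σ w (n * k)) + n ≤ n * k * cs.length w := by
      intro n hn
      induction n with
      | zero => omega
      | succ p ih =>
        rcases Nat.eq_zero_or_pos p with h1 | hp
        · subst h1; simpa using hdef
        · 
          have ihp := ih hp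
          have hsplit : twistProd ⇑σ w ((p + 1) * k)
              = twistProd ⇑σ w (p * k) * (⇑σ)^[p * k] (twistProd ⇑σ w k) := by
            rw [show (p + 1) * k = p * k + k by ring, twistProd_add]
          calc cs.length (twistProd ⇑σ w ((p + 1) * k)) + (p + 1)
              ≤ cs.length (twistProd ⇑σ w (p * k))
                + cs.length ((⇑σ)^[p * k] (twistProd ⇑σ w k)) + (p + 1) := by
                rw [hsplit]; exact Nat.add_le_add_right (cs.length_mul_le _ _) _
            _ = cs.length (twistProd ⇑σ w (p * k))
                + cs.length (twistProd ⇑σ w k) + (p + 1) := by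
                rw [length_iter_sigma cs σ hσS]
            _ ≤ p * k * cs.length w + k * cs.length w := by omega
            _ = (p + 1) * k * cs.length w := by ring
    set n := 2 * cs.length y + 1 with hn
    have h1 := hiter n (by omega)
    have h2 := hlow (n * k) (Nat.mul_pos (by omega) hk)
    omega
  refine ⟨fun w hw => ⟨hmin_straight w hw, fun hstr => hstraight_min w hw hstr⟩, ?_⟩
  intro w hw w' hw' hs hs'
  exact le_antisymm (hstraight_min w hw hs w' hw') (hstraight_min w' hw' hs' w hw)
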